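/- arXiv:2210.01175 — 9 statements merged into one kernel-verified Lean document; each statement's English description precedes it below -/
import Mathlib

section
/- Let H, F : ℝ × ℝ → Matrix (Fin 2) (Fin 2) ℂ be differentiable at a point (t,x) (entrywise partial derivatives H_t, H_x, F_t, F_x exist there). For k ∈ ℂ∖{0} define U(t,x;k) = −(i·k·σ₃ + H(t,x)) and V(t,x;k) = i·k·σ₃ + H(t,x) + (i/(4k))·F(t,x). Then the zero-curvature condition ∂U/∂x − ∂V/∂t + [U,V] = 0 holds at (t,x) for every k ∈ ℂ∖{0} if and only if the matrix Maxwell–Bloch equations hold at (t,x): ∂H/∂t + ∂H/∂x = (1/4)·[σ₃, F] and ∂F/∂t = [F, H]. -/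
open Matrix

/-- The Pauli matrix `σ₃ = diag(1, −1)`. -/
def sigma3 : Matrix (Fin 2) (Fin 2) ℂ := !![1, 0; 0, -1]

lemma zc_key (S H F Ht Hx Ft : Matrix (Fin 2) (Fin 2) ℂ) (c d : ℂ) (h : d * c = -(1/4)) :
    (-Hx) - (Ht + d • Ft)
      + ((-(c • S + H)) * (c • S + H + d • F)
          - (c • S + H + d • F) * (-(c • S + H)))
    = -(Ht + Hx - (1/4 : ℂ) • (S * F - F * S)) - d • (Ft - (F * H - H * F)) := by
  ext i j
  simp [Matrix.mul_apply, Fin.sum_univ_two, smul_eq_mul]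
  linear_combination (F i 0 * S 0 j + F i 1 * S 1 j - S i 0 * F 0 j - S i 1 * F 1 j) * h

lemma dc_eq (k : ℂ) (hk : k ≠ 0) : (Complex.I / (4 * k)) * (Complex.I * k) = -(1/4) := by
  field_simp
  linear_combination Complex.I_sq

/-- **Zero-curvature ↔ matrix Maxwell–Bloch.**
Let `H, F` be matrix-valued functions with entrywise partial derivatives `Ht, Hx, Ft, Fx` at
`(t,x)`.  For `k ≠ 0` set `U = −(i k σ₃ + H)` and `V = i k σ₃ + H + (i/(4k))·F`.  Then the
zero-curvature condition `∂U/∂x − ∂V/∂t + [U,V] = 0` holds at `(t,x)` for every `k ≠ 0` iff the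
matrix Maxwell–Bloch equations hold there: `Ht + Hx = (1/4)[σ₃, F]` and `Ft = [F, H]`. -/
theorem zero_curvature_iff_maxwell_bloch
    (H F : ℝ × ℝ → Matrix (Fin 2) (Fin 2) ℂ) (t x : ℝ)
    (Ht Hx Ft Fx : Matrix (Fin 2) (Fin 2) ℂ)
    (hHt : ∀ i j, HasDerivAt (fun s => H (s, x) i j) (Ht i j) t)
    (hHx : ∀ i j, HasDerivAt (fun s => H (t, s) i j) (Hx i j) x)
    (hFt : ∀ i j, HasDerivAt (fun s => F (s, x) i j) (Ft i j) t)
    (hFx : ∀ i j, HasDerivAt (fun s => F (t, s) i j) (Fx i j) x) :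
    (∀ k : ℂ, k ≠ 0 →
        (-Hx) - (Ht + (Complex.I / (4 * k)) • Ft)
          + ((-((Complex.I * k) • sigma3 + H (t, x)))
                * ((Complex.I * k) • sigma3 + H (t, x) + (Complex.I / (4 * k)) • F (t, x))
              - ((Complex.I * k) • sigma3 + H (t, x) + (Complex.I / (4 * k)) • F (t, x))
                * (-((Complex.I * k) • sigma3 + H (t, x)))) = 0)
    ↔
    (Ht + Hx = (1/4 : ℂ) • (sigma3 * F (t, x) - F (t, x) * sigma3) ∧
      Ft = F (t, x) * H (t, x) - H (t, x) * F (t, x)) := by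
  set C := Ht + Hx - (1/4 : ℂ) • (sigma3 * F (t, x) - F (t, x) * sigma3) with hC
  set D := Ft - (F (t, x) * H (t, x) - H (t, x) * F (t, x)) with hD
  have key : ∀ k : ℂ, k ≠ 0 →
      ((-Hx) - (Ht + (Complex.I / (4 * k)) • Ft)
          + ((-((Complex.I * k) • sigma3 + H (t, x)))
                * ((Complex.I * k) • sigma3 + H (t, x) + (Complex.I / (4 * k)) • F (t, x))
              - ((Complex.I * k) • sigma3 + H (t, x) + (Complex.I / (4 * k)) • F (t, x))
                * (-((Complex.I * k) • sigma3 + H (t, x)))))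
      = -C - (Complex.I / (4 * k)) • D := fun k hk =>
    zc_key sigma3 (H (t, x)) (F (t, x)) Ht Hx Ft _ _ (dc_eq k hk)
  constructor
  · intro h
    have h1 := h 1 one_ne_zero
    have h2 := h (-1) (by norm_num)
    rw [key 1 one_ne_zero] at h1
    rw [key (-1) (by norm_num)] at h2
    have hDzero : D = 0 := by
      ext i j
      have e1 := congrFun (congrFun h1 i) j
      have e2 := congrFun (congrFun h2 i) j
      simp [smul_eq_mul] at e1 e2 ⊢
      have e3 : Complex.I * D i j = 0 := by
        field_simp at e1 e2
        linear_combination (-(1/2 : ℂ)) * (e1 - e2)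
      rcases mul_eq_zero.mp e3 with h' | h'
      · exact absurd h' Complex.I_ne_zero
      · exact h'
    have hCzero : C = 0 := by
      rw [hDzero, smul_zero, sub_zero, neg_eq_zero] at h1
      exact h1
    constructor
    · exact sub_eq_zero.mp hCzero
    · exact sub_eq_zero.mp hDzero
  · rintro ⟨e1, e2⟩
    intro k hk
    rw [key k hk, hC, hD, sub_eq_zero_of_eq e1, sub_eq_zero_of_eq e2]
    simp
end

section
/- Let U, V : ℝ × ℝ → Matrix (Fin 2) (Fin 2) ℂ be continuously differentiable and satisfy the compatibility condition ∂U/∂x − ∂V/∂t + [U,V] = 0 at every point (t,x) ∈ ℝ². Let F : ℝ × ℝ → Matrix (Fin 2) (Fin 2) ℂ be twice continuously differentiable and satisfy the t-equation ∂F/∂t(t,x) = U(t,x)·F(t,x) for all (t,x). If for some t₀ ∈ ℝ the x-equation holds on the line t = t₀, i.e. ∂F/∂x(t₀,x) = V(t₀,x)·F(t₀,x) for all x ∈ ℝ, then the x-equation ∂F/∂x(t,x) = V(t,x)·F(t,x) holds for all (t,x) ∈ ℝ². -/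
open Matrix Set

namespace PropagationAux

lemma slice_right (w : ℝ × ℝ → ℂ) (t x : ℝ) (hw : DifferentiableAt ℝ w (t, x)) :
    HasDerivAt (fun y => w (t, y)) (fderiv ℝ w (t, x) (0, 1)) x := by
  have h := hw.hasFDerivAt.comp_hasDerivAt x
    ((hasDerivAt_const x t).prodMk (hasDerivAt_id x))
  exact h

lemma slice_left (w : ℝ × ℝ → ℂ) (t x : ℝ) (hw : DifferentiableAt ℝ w (t, x)) :
    HasDerivAt (fun s => w (s, x)) (fderiv ℝ w (t, x) (1, 0)) t := by
  have h := hw.hasFDerivAt.comp_hasDerivAt t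
    ((hasDerivAt_id t).prodMk (hasDerivAt_const t x))
  exact h

/-- Action of a matrix on `Fin 2 → Fin 2 → ℂ` by left multiplication. -/
noncomputable def act (M : Matrix (Fin 2) (Fin 2) ℂ) (g : Fin 2 → Fin 2 → ℂ) :
    Fin 2 → Fin 2 → ℂ :=
  fun i j => ∑ k, M i k * g k j

lemma act_zero (M : Matrix (Fin 2) (Fin 2) ℂ) : act M 0 = 0 := by
  funext i j; simp [act]

lemma act_sub (M : Matrix (Fin 2) (Fin 2) ℂ) (g g' : Fin 2 → Fin 2 → ℂ) :
    act M g - act M g' = act M (g - g') := by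
  funext i j
  simp only [act, Pi.sub_apply, ← Finset.sum_sub_distrib, mul_sub]

lemma norm_act_le {M : Matrix (Fin 2) (Fin 2) ℂ} {C : ℝ} (hC : 0 ≤ C)
    (hM : ∀ i k, ‖M i k‖ ≤ C) (g : Fin 2 → Fin 2 → ℂ) :
    ‖act M g‖ ≤ 2 * C * ‖g‖ := by
  have hg : ∀ k j, ‖g k j‖ ≤ ‖g‖ := fun k j =>
    (norm_le_pi_norm (g k) j).trans (norm_le_pi_norm g k)
  have h0 : 0 ≤ 2 * C * ‖g‖ := by positivity
  rw [pi_norm_le_iff_of_nonneg h0]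
  intro i
  rw [pi_norm_le_iff_of_nonneg h0]
  intro j
  calc ‖∑ k, M i k * g k j‖ ≤ ∑ k, ‖M i k * g k j‖ := norm_sum_le _ _
    _ ≤ ∑ _k : Fin 2, C * ‖g‖ := by
        refine Finset.sum_le_sum fun k _ => ?_
        rw [norm_mul]
        exact mul_le_mul (hM i k) (hg k j) (norm_nonneg _) hC
    _ = 2 * C * ‖g‖ := by simp [Fin.sum_univ_two]; ring

lemma act_lipschitz {M : Matrix (Fin 2) (Fin 2) ℂ} {C : ℝ} (hC : 0 ≤ C)
    (hM : ∀ i k, ‖M i k‖ ≤ C) :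
    LipschitzWith (Real.toNNReal (2 * C)) (act M) := by
  refine LipschitzWith.of_dist_le_mul fun g g' => ?_
  rw [dist_eq_norm, dist_eq_norm, act_sub]
  calc ‖act M (g - g')‖ ≤ 2 * C * ‖g - g'‖ := norm_act_le hC hM (g - g')
    _ ≤ (Real.toNNReal (2 * C)) * ‖g - g'‖ := by
        gcongr
        exact Real.le_coe_toNNReal _

end PropagationAux

open PropagationAux

/-- **Propagation lemma (Boutet de Monvel–Kotlyarov, Lemma 2.1).**
Let `U, V` be continuously differentiable matrix-valued functions satisfying the compatibility
condition `∂U/∂x − ∂V/∂t + [U,V] = 0` everywhere,  and let `F` be twice continuously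
differentiable and satisfy the `t`-equation `∂F/∂t = U·F` everywhere.  If the `x`-equation
`∂F/∂x = V·F` holds on the line `t = t₀`, then it holds everywhere. -/
theorem propagation_of_x_equation
    (U V F : ℝ × ℝ → Matrix (Fin 2) (Fin 2) ℂ)
    (hU : ∀ i j, ContDiff ℝ 1 (fun p : ℝ × ℝ => U p i j))
    (hV : ∀ i j, ContDiff ℝ 1 (fun p : ℝ × ℝ => V p i j))
    (hF : ∀ i j, ContDiff ℝ 2 (fun p : ℝ × ℝ => F p i j))
    (hcompat : ∀ t x : ℝ, ∀ i j,
      deriv (fun s => U (t, s) i j) x - deriv (fun s => V (s, x) i j) t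
        + (U (t, x) * V (t, x) - V (t, x) * U (t, x)) i j = 0)
    (hteq : ∀ t x : ℝ, ∀ i j,
      HasDerivAt (fun s => F (s, x) i j) ((U (t, x) * F (t, x)) i j) t)
    (t₀ : ℝ)
    (hxeq₀ : ∀ x : ℝ, ∀ i j,
      HasDerivAt (fun s => F (t₀, s) i j) ((V (t₀, x) * F (t₀, x)) i j) x) :
    ∀ t x : ℝ, ∀ i j,
      HasDerivAt (fun s => F (t, s) i j) ((V (t, x) * F (t, x)) i j) x := by
  intro t x
  have hFd : ∀ i j, Differentiable ℝ (fun p : ℝ × ℝ => F p i j) :=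
    fun i j => (hF i j).differentiable (by norm_num)
  have hF' : ∀ i j, ContDiff ℝ 1 (fderiv ℝ (fun p : ℝ × ℝ => F p i j)) :=
    fun i j => (hF i j).fderiv_right (by norm_num)
  set φ : Fin 2 → Fin 2 → ℝ × ℝ → ℂ :=
    fun i j p => fderiv ℝ (fun q : ℝ × ℝ => F q i j) p (0, 1) with hφdef
  have hφc : ∀ i j, ContDiff ℝ 1 (φ i j) := fun i j =>
    (hF' i j).clm_apply contDiff_const
  have hφslice : ∀ (s y : ℝ) (i j : Fin 2),
      HasDerivAt (fun y' => F (s, y') i j) (φ i j (s, y)) y :=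
    fun s y i j => slice_right _ s y (hFd i j (s, y))
  -- the mixed partial computation
  have key : ∀ (s : ℝ) (i j : Fin 2),
      HasDerivAt (fun r => φ i j (r, x))
        (∑ k, (deriv (fun y => U (s, y) i k) x * F (s, x) k j
            + U (s, x) i k * φ k j (s, x))) s := by
    intro s i j
    have hf'' : HasFDerivAt (fderiv ℝ (fun q : ℝ × ℝ => F q i j))
        (fderiv ℝ (fderiv ℝ (fun q : ℝ × ℝ => F q i j)) (s, x)) (s, x) :=
      (((hF' i j).differentiable one_ne_zero) (s, x)).hasFDerivAt
    have h1 : HasDerivAt (fun r => φ i j (r, x)) (fderiv ℝ (φ i j) (s, x) (1, 0)) s :=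
      slice_left _ s x (((hφc i j).differentiable one_ne_zero) (s, x))
    have h2 : fderiv ℝ (φ i j) (s, x)
        = (ContinuousLinearMap.apply ℝ ℂ (((0 : ℝ), (1 : ℝ)) : ℝ × ℝ)).comp
            (fderiv ℝ (fderiv ℝ (fun q : ℝ × ℝ => F q i j)) (s, x)) := by
      have hc : HasFDerivAt (φ i j)
          ((ContinuousLinearMap.apply ℝ ℂ (((0 : ℝ), (1 : ℝ)) : ℝ × ℝ)).comp
            (fderiv ℝ (fderiv ℝ (fun q : ℝ × ℝ => F q i j)) (s, x))) (s, x) :=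
        (ContinuousLinearMap.apply ℝ ℂ (((0 : ℝ), (1 : ℝ)) : ℝ × ℝ)).hasFDerivAt.comp (s, x) hf''
      exact hc.fderiv
    have hsym := ((hF i j).contDiffAt (x := ((s, x) : ℝ × ℝ))).isSymmSndFDerivAt (by simp [minSmoothness_of_isRCLikeNormedField])
      (((1 : ℝ), (0 : ℝ)) : ℝ × ℝ) (((0 : ℝ), (1 : ℝ)) : ℝ × ℝ)
    -- the function p ↦ ∂F/∂t p  and its x-derivative
    have hχ : HasFDerivAt (fun p : ℝ × ℝ => fderiv ℝ (fun q : ℝ × ℝ => F q i j) p (1, 0))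
        ((ContinuousLinearMap.apply ℝ ℂ (((1 : ℝ), (0 : ℝ)) : ℝ × ℝ)).comp
          (fderiv ℝ (fderiv ℝ (fun q : ℝ × ℝ => F q i j)) (s, x))) (s, x) :=
      (ContinuousLinearMap.apply ℝ ℂ (((1 : ℝ), (0 : ℝ)) : ℝ × ℝ)).hasFDerivAt.comp (s, x) hf''
    have hχslice : HasDerivAt
        (fun y => fderiv ℝ (fun q : ℝ × ℝ => F q i j) (s, y) (1, 0))
        (fderiv ℝ (fderiv ℝ (fun q : ℝ × ℝ => F q i j)) (s, x) (0, 1) (1, 0)) x := by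
      have h := hχ.comp_hasDerivAt x ((hasDerivAt_const x s).prodMk (hasDerivAt_id x))
      exact h
    have hleft : ∀ (r y : ℝ),
        fderiv ℝ (fun q : ℝ × ℝ => F q i j) (r, y) (1, 0) = (U (r, y) * F (r, y)) i j :=
      fun r y => (slice_left _ r y (hFd i j (r, y))).unique (hteq r y i j)
    have heqfun : (fun y => fderiv ℝ (fun q : ℝ × ℝ => F q i j) (s, y) (1, 0))
        = fun y => ∑ k, U (s, y) i k * F (s, y) k j := by
      funext y
      rw [hleft s y, Matrix.mul_apply]
    rw [heqfun] at hχslice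
    have hdir : HasDerivAt (fun y => ∑ k, U (s, y) i k * F (s, y) k j)
        (∑ k, (deriv (fun y => U (s, y) i k) x * F (s, x) k j
            + U (s, x) i k * φ k j (s, x))) x := by
      refine HasDerivAt.fun_sum fun k _ => ?_
      have hUk : HasDerivAt (fun y => U (s, y) i k) (deriv (fun y => U (s, y) i k) x) x :=
        (slice_right _ s x (((hU i k).differentiable one_ne_zero) (s, x))).differentiableAt.hasDerivAt
      exact hUk.mul (hφslice s x k j)
    have hmix : fderiv ℝ (fderiv ℝ (fun q : ℝ × ℝ => F q i j)) (s, x) (0, 1) (1, 0)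
        = ∑ k, (deriv (fun y => U (s, y) i k) x * F (s, x) k j
            + U (s, x) i k * φ k j (s, x)) := hχslice.unique hdir
    have hval : fderiv ℝ (φ i j) (s, x) (1, 0)
        = ∑ k, (deriv (fun y => U (s, y) i k) x * F (s, x) k j
            + U (s, x) i k * φ k j (s, x)) := by
      rw [h2]
      simpa using hsym.trans hmix
    rw [← hval]
    exact h1
  -- the function G and its ODE
  set G : ℝ → (Fin 2 → Fin 2 → ℂ) :=
    fun s i j => φ i j (s, x) - ∑ k, V (s, x) i k * F (s, x) k j with hGdef
  have hGderiv : ∀ s : ℝ, HasDerivAt G (act (U (s, x)) (G s)) s := by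
    intro s
    refine hasDerivAt_pi.2 fun i => hasDerivAt_pi.2 fun j => ?_
    have hsum : HasDerivAt (fun r => ∑ k, V (r, x) i k * F (r, x) k j)
        (∑ k, (deriv (fun r => V (r, x) i k) s * F (s, x) k j
            + V (s, x) i k * (U (s, x) * F (s, x)) k j)) s := by
      refine HasDerivAt.fun_sum fun k _ => ?_
      have hVk : HasDerivAt (fun r => V (r, x) i k) (deriv (fun r => V (r, x) i k) s) s :=
        (slice_left _ s x (((hV i k).differentiable one_ne_zero) (s, x))).differentiableAt.hasDerivAt
      exact hVk.mul (hteq s x k j)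
    have h := (key s i j).fun_sub hsum
    have hfun : (fun r => G r i j)
        = fun r => φ i j (r, x) - ∑ k, V (r, x) i k * F (r, x) k j := by
      rw [hGdef]
    rw [hfun]
    convert h using 1
    have hc0 := hcompat s x i 0
    have hc1 := hcompat s x i 1
    simp only [Matrix.mul_apply, Matrix.sub_apply, Fin.sum_univ_two, act, hGdef] at *
    linear_combination (-(F (s, x) 0 j)) * hc0 + (-(F (s, x) 1 j)) * hc1
  have hG0 : G t₀ = 0 := by
    funext i j
    have h1 : φ i j (t₀, x) = (V (t₀, x) * F (t₀, x)) i j :=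
      (hφslice t₀ x i j).unique (hxeq₀ x i j)
    simp only [hGdef, h1, Matrix.mul_apply, Pi.zero_apply]
    simp
  -- uniqueness of the ODE solution on a compact interval
  set a : ℝ := min t₀ t - 1 with hadef
  set b : ℝ := max t₀ t + 1 with hbdef
  have hat₀ : a < t₀ := by
    have := min_le_left t₀ t; simp only [hadef]; linarith
  have hbt₀ : t₀ < b := by
    have := le_max_left t₀ t; simp only [hbdef]; linarith
  have hat : a ≤ t := by
    have := min_le_right t₀ t; simp only [hadef]; linarith
  have hbt : t ≤ b := by
    have := le_max_right t₀ t; simp only [hbdef]; linarith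
  have hUEcont : Continuous (fun s : ℝ => (fun i k => U (s, x) i k : Fin 2 → Fin 2 → ℂ)) := by
    refine continuous_pi fun i => continuous_pi fun k => ?_
    exact ((hU i k).continuous).comp (continuous_id.prodMk continuous_const)
  obtain ⟨C, hC⟩ := (isCompact_Icc : IsCompact (Set.Icc a b)).exists_bound_of_continuousOn
    hUEcont.continuousOn
  set C' : ℝ := max C 0 with hC'def
  have hC'0 : (0 : ℝ) ≤ C' := le_max_right _ _
  set w : ℝ → ℝ := fun s => max a (min s b) with hwdef
  have hwmem : ∀ s, w s ∈ Set.Icc a b := fun s =>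
    ⟨le_max_left _ _, max_le (by linarith) (min_le_right _ _)⟩
  have hwid : ∀ s ∈ Set.Ioo a b, w s = s := by
    intro s hs
    rw [hwdef]
    simp only
    rw [min_eq_left (le_of_lt hs.2), max_eq_right (le_of_lt hs.1)]
  set v : ℝ → (Fin 2 → Fin 2 → ℂ) → (Fin 2 → Fin 2 → ℂ) :=
    fun s g => act (U (w s, x)) g with hvdef
  have hvlip : ∀ s : ℝ, LipschitzOnWith (Real.toNNReal (2 * C')) (v s) Set.univ := by
    intro s
    refine (act_lipschitz hC'0 ?_).lipschitzOnWith
    intro i k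
    have h1 : ‖(fun i k => U (w s, x) i k : Fin 2 → Fin 2 → ℂ)‖ ≤ C := hC _ (hwmem s)
    have h2 : ‖U (w s, x) i k‖ ≤ ‖(fun i k => U (w s, x) i k : Fin 2 → Fin 2 → ℂ)‖ :=
      (norm_le_pi_norm (fun k' => U (w s, x) i k') k).trans
        (norm_le_pi_norm (fun i' k' => U (w s, x) i' k') i)
    exact (h2.trans h1).trans (le_max_left _ _)
  have hGcont : ContinuousOn G (Set.Icc a b) :=
    Continuous.continuousOn (continuous_iff_continuousAt.2 fun s => (hGderiv s).continuousAt)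
  have hG' : ∀ s ∈ Set.Ioo a b, HasDerivAt G (v s (G s)) s := by
    intro s hs
    have : v s (G s) = act (U (s, x)) (G s) := by rw [hvdef]; simp only [hwid s hs]
    rw [this]
    exact hGderiv s
  have hg' : ∀ s ∈ Set.Ioo a b,
      HasDerivAt (fun _ : ℝ => (0 : Fin 2 → Fin 2 → ℂ)) (v s ((fun _ => 0) s)) s := by
    intro s _
    have : v s 0 = 0 := by rw [hvdef]; exact act_zero _
    simpa [this] using hasDerivAt_const s (0 : Fin 2 → Fin 2 → ℂ)
  have huniq : Set.EqOn G (fun _ => (0 : Fin 2 → Fin 2 → ℂ)) (Set.Icc a b) :=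
    ODE_solution_unique_of_mem_Icc (fun s _ => hvlip s) ⟨hat₀, hbt₀⟩ hGcont hG'
      (fun _ _ => trivial) continuousOn_const hg' (fun _ _ => trivial) hG0
  have hGt : G t = 0 := huniq ⟨hat, hbt⟩
  intro i j
  have hzero : φ i j (t, x) - ∑ k, V (t, x) i k * F (t, x) k j = 0 := by
    have := congrFun (congrFun hGt i) j
    simpa [hGdef] using this
  have hphi : φ i j (t, x) = (V (t, x) * F (t, x)) i j := by
    rw [Matrix.mul_apply]
    exact sub_eq_zero.mp hzero
  rw [← hphi]
  exact hφslice t x i j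
end

section
/- Let r ∈ ℂ and θ ∈ ℝ, and let J be the 2×2 complex matrix with rows (1 + |r|², −r·e^{−2iθ}) and (−conj(r)·e^{2iθ}, 1). Then det J = 1, and the matrix J + conj(Jᵀ) is Hermitian positive definite: for every nonzero v ∈ ℂ², the quadratic form conj(v)ᵀ·(J + conj(Jᵀ))·v is a positive real number. -/
open Matrix

/-- **Positivity of the jump matrix (Zhou's Schwartz-reflection condition).**
For `r ∈ ℂ` and `θ ∈ ℝ`, the jump matrix
`J = [[1 + |r|², −r·e^{−2iθ}], [−conj r·e^{2iθ}, 1]]` has determinant `1`, and `J + conj(Jᵀ)`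
is positive definite: for every nonzero `v ∈ ℂ²` the quadratic form
`conj(v)ᵀ·(J + conj(Jᵀ))·v` is a positive real number. -/
theorem jump_matrix_positive_definite (r : ℂ) (θ : ℝ)
    (J : Matrix (Fin 2) (Fin 2) ℂ)
    (hJ : J = !![1 + (‖r‖ : ℂ) ^ 2, -r * Complex.exp (-2 * Complex.I * θ);
                 -(starRingEnd ℂ) r * Complex.exp (2 * Complex.I * θ), 1]) :
    J.det = 1 ∧
    ∀ v : Fin 2 → ℂ, v ≠ 0 →
      0 < (dotProduct (star v) ((J + J.conjTranspose).mulVec v)).re ∧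
      (dotProduct (star v) ((J + J.conjTranspose).mulVec v)).im = 0 := by
  have habs : (‖r‖ : ℂ) ^ 2 = r * (starRingEnd ℂ) r := by
    rw [← Complex.ofReal_pow, Complex.sq_norm, Complex.mul_conj]
  have harg : (-2 : ℂ) * Complex.I * θ = -(2 * Complex.I * θ) := by ring
  have hE : Complex.exp (2 * Complex.I * θ) * Complex.exp (-(2 * Complex.I * θ)) = 1 := by
    rw [← Complex.exp_add, add_neg_cancel, Complex.exp_zero]
  subst hJ
  rw [harg]
  constructor
  · simp [Matrix.det_fin_two]
    linear_combination habs - (r * (starRingEnd ℂ) r) * hE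
  · intro v hv
    have key : dotProduct (star v)
        ((!![1 + (‖r‖ : ℂ) ^ 2, -r * Complex.exp (-(2 * Complex.I * θ));
             -(starRingEnd ℂ) r * Complex.exp (2 * Complex.I * θ), 1] +
          (!![1 + (‖r‖ : ℂ) ^ 2, -r * Complex.exp (-(2 * Complex.I * θ));
             -(starRingEnd ℂ) r * Complex.exp (2 * Complex.I * θ), 1]).conjTranspose).mulVec v) =
        2 * Complex.normSq (v 0) +
        2 * Complex.normSq ((starRingEnd ℂ) r * Complex.exp (2 * Complex.I * θ) * v 0 - v 1) := by
      have hc : (starRingEnd ℂ) (Complex.exp (2 * Complex.I * θ)) =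
          Complex.exp (-(2 * Complex.I * θ)) := by
        rw [← Complex.exp_conj]
        congr 1
        simp only [_root_.map_mul, Complex.conj_I, Complex.conj_ofReal, map_ofNat]
        ring
      have hc' : (starRingEnd ℂ) (Complex.exp (-(2 * Complex.I * θ))) =
          Complex.exp (2 * Complex.I * θ) := by
        rw [← Complex.exp_conj]
        congr 1
        simp only [map_neg, _root_.map_mul, Complex.conj_I, Complex.conj_ofReal, map_ofNat]
        ring
      rw [← Complex.mul_conj, ← Complex.mul_conj]
      simp [dotProduct, Matrix.mulVec, Matrix.conjTranspose_apply, Fin.sum_univ_two,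
        hc, hc', habs, map_sub, _root_.map_mul, Complex.conj_conj, Complex.conj_ofReal]
      push_cast [habs]
      ring_nf
      ring_nf at hE
      linear_combination (-2 * r * (starRingEnd ℂ) r * v 0 * (starRingEnd ℂ) (v 0)) * hE
    constructor
    · rw [key]
      have hne : 0 < Complex.normSq (v 0) ∨
          0 < Complex.normSq ((starRingEnd ℂ) r * Complex.exp (2 * Complex.I * θ) * v 0 - v 1) := by
        by_contra h
        push_neg at h
        obtain ⟨ha, hb⟩ := h
        have ha' : Complex.normSq (v 0) = 0 := le_antisymm ha (Complex.normSq_nonneg _)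
        have hb' : Complex.normSq ((starRingEnd ℂ) r * Complex.exp (2 * Complex.I * θ) * v 0 - v 1) = 0 :=
          le_antisymm hb (Complex.normSq_nonneg _)
        rw [Complex.normSq_eq_zero] at ha' hb'
        apply hv
        funext i
        fin_cases i
        · exact ha'
        · have := hb'
          rw [ha'] at this
          simpa [sub_eq_zero] using this.symm
      have h0 : 0 ≤ Complex.normSq (v 0) := Complex.normSq_nonneg _
      have h1 : 0 ≤ Complex.normSq ((starRingEnd ℂ) r * Complex.exp (2 * Complex.I * θ) * v 0 - v 1) :=
        Complex.normSq_nonneg _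
      push_cast
      simp only [Complex.add_re, Complex.mul_re, Complex.ofReal_re, Complex.ofReal_im,
        Complex.re_ofNat, Complex.im_ofNat]
      rcases hne with h | h <;> nlinarith
    · rw [key]
      push_cast
      simp
end

section
/- Let γ ∈ ℝ and let y : ℝ → ℝ be a function for which there exists z₀ such that for all z ≥ z₀ one has y(z) > 1 and y(z) − γ·ln(y(z)) = z. Then, as z → +∞, y(z) − z − γ·ln z − γ²·(ln z)/z − γ³·(2·ln z − (ln z)²)/(2z²) = O((ln z)³ / z³). -/
lemma log_taylor_bound {x : ℝ} (hx : |x| ≤ 1/2) :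
    |Real.log (1+x)| ≤ 2*|x| ∧ |Real.log (1+x) - x| ≤ 2*x^2 ∧
      |Real.log (1+x) - x + x^2/2| ≤ 2*|x|^3 := by
  have hx1 : |(-x)| < 1 := by rw [abs_neg]; linarith [abs_nonneg x]
  have hhalf : (1:ℝ)/2 ≤ 1 - |x| := by linarith
  have h0 := Real.abs_log_sub_add_sum_range_le hx1 0
  have h1 := Real.abs_log_sub_add_sum_range_le hx1 1
  have h2 := Real.abs_log_sub_add_sum_range_le hx1 2
  simp [Finset.sum_range_succ, sub_neg_eq_add, abs_neg] at h0 h1 h2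
  have haux : ∀ n : ℕ, |x|^n / (1 - |x|) ≤ 2*|x|^n := by
    intro n
    rw [div_le_iff₀ (by linarith)]
    nlinarith [pow_nonneg (abs_nonneg x) n]
  refine ⟨?_, ?_, ?_⟩
  · calc |Real.log (1+x)| ≤ |x|^1/(1-|x|) := by simpa using h0
      _ ≤ 2*|x|^1 := haux 1
      _ = 2*|x| := by ring
  · calc |Real.log (1+x) - x| = |(-x) + Real.log (1+x)| := by
          rw [show Real.log (1+x) - x = (-x) + Real.log (1+x) by ring]
      _ ≤ |x|^2/(1-|x|) := by simpa using h1
      _ ≤ 2*|x|^2 := haux 2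
      _ = 2*x^2 := by rw [sq_abs]
  · calc |Real.log (1+x) - x + x^2/2|
        = |(-x + (-x)^2/(1+1)) + Real.log (1+x)| := by
          rw [show Real.log (1+x) - x + x^2/2 = (-x + (-x)^2/(1+1)) + Real.log (1+x) by ring]
      _ ≤ |x|^3/(1-|x|) := by simpa using h2
      _ ≤ 2*|x|^3 := haux 3

lemma sqrt_quad_bound {s t m : ℝ} (hs : 0 ≤ s) (ht : 0 < t) (hm : 0 < m)
    (h8 : 8*m ≤ t) (h1 : s^2 ≤ t^2 + 2*m*s) : s ≤ 2*t := by
  nlinarith [mul_nonneg hs ht.le, mul_nonneg hs (by linarith : (0:ℝ) ≤ t/4 - 2*m)]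

set_option maxHeartbeats 2000000 in
/-- **Lambert-type inversion lemma.**
Let `γ ∈ ℝ` and let `y : ℝ → ℝ` satisfy, for all sufficiently large `z`, `y z > 1` and
`y z − γ·ln(y z) = z`.  Then, as `z → +∞`,
`y z = z + γ·ln z + γ²·(ln z)/z + γ³·(2 ln z − ln²z)/(2z²) + O((ln z)³/z³)`. -/
theorem lambert_inversion
    (γ : ℝ) (y : ℝ → ℝ)
    (h : ∃ z₀ : ℝ, ∀ z ≥ z₀, 1 < y z ∧ y z - γ * Real.log (y z) = z) :
    ∃ C > 0, ∃ Z : ℝ, ∀ z ≥ Z,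
      |y z - z - γ * Real.log z - γ ^ 2 * Real.log z / z
          - γ ^ 3 * (2 * Real.log z - (Real.log z) ^ 2) / (2 * z ^ 2)|
        ≤ C * (Real.log z) ^ 3 / z ^ 3 := by
  obtain ⟨z₀, hz₀⟩ := h
  set M : ℝ := max |γ| 1 with hM
  clear_value M
  have hM1 : 1 ≤ M := by rw [hM]; exact le_max_right _ _
  have hγM : |γ| ≤ M := by rw [hM]; exact le_max_left _ _
  have hMpos : 0 < M := by linarith
  refine ⟨40*M^5, by positivity, max z₀ (max (64*M^2) 9), ?_⟩
  intro z hz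
  have hzz0 : z₀ ≤ z := le_trans (le_max_left _ _) hz
  have hz64 : 64*M^2 ≤ z := le_trans (le_trans (le_max_left _ _) (le_max_right _ _)) hz
  have hz9 : (9:ℝ) ≤ z := le_trans (le_trans (le_max_right _ _) (le_max_right _ _)) hz
  have hzpos : 0 < z := by linarith
  obtain ⟨hy1, heq⟩ := hz₀ z hzz0
  set w := y z with hw
  set L := Real.log z with hL
  clear_value w L
  -- basic facts about L
  have hL1 : 1 ≤ L := by
    have hexp : Real.exp 1 ≤ z := by linarith [Real.exp_one_lt_d9]
    calc (1:ℝ) = Real.log (Real.exp 1) := (Real.log_exp 1).symm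
      _ ≤ L := by rw [hL]; exact Real.log_le_log (Real.exp_pos 1) hexp
  have hsq : Real.sqrt z ^ 2 = z := Real.sq_sqrt hzpos.le
  have hsnn : 0 ≤ Real.sqrt z := Real.sqrt_nonneg z
  have hsz : 8*M ≤ Real.sqrt z := by
    have h1 : Real.sqrt (64*M^2) ≤ Real.sqrt z := Real.sqrt_le_sqrt hz64
    have h2 : Real.sqrt (64*M^2) = 8*M := by
      rw [show (64:ℝ)*M^2 = (8*M)^2 by ring]
      exact Real.sqrt_sq (by positivity)
    linarith
  have hLsqrt : L ≤ 2*Real.sqrt z := by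
    have h1 : Real.log (Real.sqrt z) ≤ Real.sqrt z - 1 :=
      Real.log_le_sub_one_of_pos (Real.sqrt_pos.mpr hzpos)
    have h2 : Real.log (Real.sqrt z) = L/2 := by rw [hL, Real.log_sqrt hzpos.le]
    linarith
  have hLz4 : 4*M*L ≤ z := by
    linarith [mul_nonneg (by linarith : (0:ℝ) ≤ Real.sqrt z - 8*M) hsnn,
      mul_nonneg hMpos.le (by linarith : (0:ℝ) ≤ 2*Real.sqrt z - L), hsq]
  have hLz : L ≤ z := by
    linarith [mul_nonneg hsnn (by linarith : (0:ℝ) ≤ Real.sqrt z - 2), hsq]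
  have hLsq : 1 ≤ L^2 := by linarith [mul_le_mul hL1 hL1 zero_le_one (by linarith : (0:ℝ) ≤ L)]
  have hL3 : L ≤ L^3 := by linarith [mul_le_mul_of_nonneg_left hLsq (by linarith : (0:ℝ) ≤ L)]
  have hL23 : L^2 ≤ L^3 := by linarith [mul_le_mul_of_nonneg_left hL1 (sq_nonneg L)]
  -- bounds on w and log w
  have hwpos : 0 < w := lt_trans one_pos hy1
  have hlogw_pos : 0 < Real.log w := Real.log_pos hy1
  have hsqw : Real.sqrt w ^ 2 = w := Real.sq_sqrt hwpos.le
  have hswnn : 0 ≤ Real.sqrt w := Real.sqrt_nonneg w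
  have hsw : Real.log w ≤ 2*Real.sqrt w := by
    have h1 : Real.log (Real.sqrt w) ≤ Real.sqrt w - 1 :=
      Real.log_le_sub_one_of_pos (Real.sqrt_pos.mpr hwpos)
    have h2 : Real.log (Real.sqrt w) = Real.log w / 2 := by rw [Real.log_sqrt hwpos.le]
    linarith
  have hglw : γ * Real.log w ≤ 2*M*Real.sqrt w := by
    calc γ * Real.log w ≤ |γ| * Real.log w :=
          mul_le_mul_of_nonneg_right (le_abs_self γ) hlogw_pos.le
      _ ≤ M * (2*Real.sqrt w) := mul_le_mul hγM hsw hlogw_pos.le hMpos.le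
      _ = 2*M*Real.sqrt w := by ring
  have hwz : w ≤ z + 2*M*Real.sqrt w := by linarith
  have htpos : (0:ℝ) < Real.sqrt z := by linarith
  have hquad : Real.sqrt w ^ 2 ≤ Real.sqrt z ^ 2 + 2*M*Real.sqrt w := by
    rw [hsqw, hsq]; exact hwz
  have hs2t : Real.sqrt w ≤ 2*Real.sqrt z :=
    sqrt_quad_bound hswnn htpos hMpos (by linarith) hquad
  have hw9 : w ≤ 9*z := by linarith [mul_self_le_mul_self hswnn hs2t, hsqw, hsq, mul_nonneg hsnn hsnn]
  have hlogw : Real.log w ≤ 2*L := by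
    have h1 : Real.log w ≤ Real.log (9*z) := Real.log_le_log hwpos hw9
    have h2 : Real.log (9*z) = Real.log 9 + L := by
      rw [Real.log_mul (by norm_num) hzpos.ne', hL]
    have h3 : Real.log 9 ≤ L := by rw [hL]; exact Real.log_le_log (by norm_num) hz9
    linarith
  -- the quantity u
  have hveq : w - z = γ * Real.log w := by linarith
  set u := (w - z)/z with hu
  have huz : z*u = w - z := by rw [hu, mul_div_assoc', mul_div_cancel_left₀ _ hzpos.ne']
  clear_value u
  have hA : z*|u| ≤ 2*M*L := by
    have h1 : |z*u| = z*|u| := by rw [abs_mul, abs_of_pos hzpos]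
    rw [← h1, huz, hveq, abs_mul, abs_of_pos hlogw_pos]
    calc |γ| * Real.log w ≤ M * (2*L) := mul_le_mul hγM hlogw hlogw_pos.le hMpos.le
      _ = 2*M*L := by ring
  have hu12 : |u| ≤ 1/2 := by
    have h2 : z * |u| ≤ z * (1/2) := by linarith
    exact le_of_mul_le_mul_left h2 hzpos
  have h1u : 0 < 1 + u := by
    have := abs_le.mp hu12
    linarith [this.1]
  set lg := Real.log (1+u) with hlg
  obtain ⟨hB0, hB1, hB2⟩ := log_taylor_bound hu12
  rw [← hlg] at hB0 hB1 hB2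
  clear_value lg
  have hw_eq : w = z*(1+u) := by
    have : z*(1+u) = z + z*u := by ring
    rw [this, huz]; ring
  have hlogw_eq : Real.log w = L + lg := by
    rw [hw_eq, Real.log_mul hzpos.ne' h1u.ne', ← hL, ← hlg]
  have hstar : z*u = γ*L + γ*lg := by rw [huz, hveq, hlogw_eq]; ring
  have hu_val : u = (γ*L + γ*lg)/z := by
    rw [eq_div_iff hzpos.ne']
    linarith [hstar]
  -- key identity
  have key : w - z - γ*L - γ^2*L/z - γ^3*(2*L - L^2)/(2*z^2)
      = (2*γ^2*z*(z*γ*lg) + 2*γ^2*z^3*(lg - u) - 2*γ^2*L*z*(z*γ*lg)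
          - γ*(z*γ*lg)^2 + 2*γ*z^4*(lg - u + u^2/2)) / (2*z^4) := by
    rw [hw_eq, hu_val]
    field_simp
    ring
  -- bounds on the pieces
  have hγ2 : γ^2 ≤ M^2 := by
    have := pow_le_pow_left₀ (abs_nonneg γ) hγM 2
    rwa [sq_abs] at this
  have hE1 : |z*γ*lg| ≤ 4*M^2*L := by
    rw [abs_mul, abs_mul, abs_of_pos hzpos]
    calc z * |γ| * |lg| ≤ z * M * (2*|u|) :=
          mul_le_mul (mul_le_mul_of_nonneg_left hγM hzpos.le) hB0 (abs_nonneg lg)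
            (by positivity)
      _ = 2*M*(z*|u|) := by ring
      _ ≤ 2*M*(2*M*L) := mul_le_mul_of_nonneg_left hA (by positivity)
      _ = 4*M^2*L := by ring
  have hq : z^3*|lg - u| ≤ 8*M^2*L^2*z := by
    calc z^3*|lg - u| ≤ z^3*(2*u^2) := mul_le_mul_of_nonneg_left hB1 (by positivity)
      _ = 2*z*(z*|u|)^2 := by rw [mul_pow, sq_abs]; ring
      _ ≤ 2*z*(2*M*L)^2 :=
          mul_le_mul_of_nonneg_left (pow_le_pow_left₀ (by positivity) hA 2) (by positivity)
      _ = 8*M^2*L^2*z := by ring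
  have hr : z^4*|lg - u + u^2/2| ≤ 16*M^3*L^3*z := by
    calc z^4*|lg - u + u^2/2| ≤ z^4*(2*|u|^3) := mul_le_mul_of_nonneg_left hB2 (by positivity)
      _ = 2*z*(z*|u|)^3 := by rw [mul_pow]; ring
      _ ≤ 2*z*(2*M*L)^3 :=
          mul_le_mul_of_nonneg_left (pow_le_pow_left₀ (by positivity) hA 3) (by positivity)
      _ = 16*M^3*L^3*z := by ring
  set E1 := z*γ*lg with hE1def
  set Q := lg - u with hqdef
  set R := lg - u + u^2/2 with hrdef
  set N := 2*γ^2*z*E1 + 2*γ^2*z^3*Q - 2*γ^2*L*z*E1 - γ*E1^2 + 2*γ*z^4*R with hN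
  clear_value E1 Q R N
  have hLpos : 0 < L := by linarith
  have t1 : |2*γ^2*z*E1| ≤ 8*M^4*L^3*z := by
    rw [abs_mul, abs_of_nonneg (by positivity : (0:ℝ) ≤ 2*γ^2*z)]
    calc 2*γ^2*z*|E1| ≤ 2*M^2*z*(4*M^2*L) := by
          apply mul_le_mul _ hE1 (abs_nonneg E1) (by positivity)
          linarith [mul_le_mul_of_nonneg_right hγ2 hzpos.le]
      _ = 8*M^4*L*z := by ring
      _ ≤ 8*M^4*L^3*z := by linarith [mul_le_mul_of_nonneg_right hL3 (by positivity : (0:ℝ) ≤ 8*M^4*z)]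
  have t2 : |2*γ^2*z^3*Q| ≤ 16*M^4*L^3*z := by
    rw [abs_mul, abs_of_nonneg (by positivity : (0:ℝ) ≤ 2*γ^2*z^3)]
    calc 2*γ^2*z^3*|Q| = 2*γ^2*(z^3*|Q|) := by ring
      _ ≤ 2*M^2*(8*M^2*L^2*z) := by
          apply mul_le_mul _ hq (by positivity) (by positivity)
          linarith [hγ2]
      _ = 16*M^4*L^2*z := by ring
      _ ≤ 16*M^4*L^3*z := by linarith [mul_le_mul_of_nonneg_right hL23 (by positivity : (0:ℝ) ≤ 16*M^4*z)]
  have t3 : |2*γ^2*L*z*E1| ≤ 8*M^4*L^3*z := by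
    rw [abs_mul, abs_of_nonneg (by positivity : (0:ℝ) ≤ 2*γ^2*L*z)]
    calc 2*γ^2*L*z*|E1| ≤ 2*M^2*L*z*(4*M^2*L) := by
          apply mul_le_mul _ hE1 (abs_nonneg E1) (by positivity)
          linarith [mul_le_mul_of_nonneg_right hγ2 (by positivity : (0:ℝ) ≤ L*z)]
      _ = 8*M^4*L^2*z := by ring
      _ ≤ 8*M^4*L^3*z := by linarith [mul_le_mul_of_nonneg_right hL23 (by positivity : (0:ℝ) ≤ 8*M^4*z)]
  have t4 : |γ*E1^2| ≤ 16*M^5*L^3*z := by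
    rw [abs_mul, abs_pow]
    calc |γ| * |E1|^2 ≤ M * (4*M^2*L)^2 :=
          mul_le_mul hγM (pow_le_pow_left₀ (abs_nonneg E1) hE1 2) (by positivity) hMpos.le
      _ = 16*M^5*L^2 := by ring
      _ ≤ 16*M^5*L^3*z := by linarith [mul_le_mul_of_nonneg_right hL23 (by positivity : (0:ℝ) ≤ 16*M^5), mul_le_mul_of_nonneg_left hz9 (by positivity : (0:ℝ) ≤ 16*M^5*L^3), (by positivity : (0:ℝ) ≤ 16*M^5*L^3)]
  have t5 : |2*γ*z^4*R| ≤ 32*M^4*L^3*z := by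
    rw [abs_mul, abs_mul, abs_mul, abs_of_nonneg (by norm_num : (0:ℝ) ≤ (2:ℝ)),
      abs_of_nonneg (by positivity : (0:ℝ) ≤ z^4)]
    calc 2 * |γ| * z^4 * |R| = 2 * |γ| * (z^4 * |R|) := by ring
      _ ≤ 2*M*(16*M^3*L^3*z) := by
          apply mul_le_mul _ hr (by positivity) (by positivity)
          linarith [hγM]
      _ = 32*M^4*L^3*z := by ring
  have hTri : |N| ≤ |2*γ^2*z*E1| + |2*γ^2*z^3*Q| + |2*γ^2*L*z*E1| + |γ*E1^2| + |2*γ*z^4*R| := by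
    rw [hN]
    have h4 := abs_add_le (2*γ^2*z*E1 + 2*γ^2*z^3*Q - 2*γ^2*L*z*E1 - γ*E1^2) (2*γ*z^4*R)
    have h3 := abs_sub (2*γ^2*z*E1 + 2*γ^2*z^3*Q - 2*γ^2*L*z*E1) (γ*E1^2)
    have h2 := abs_sub (2*γ^2*z*E1 + 2*γ^2*z^3*Q) (2*γ^2*L*z*E1)
    have h1 := abs_add_le (2*γ^2*z*E1) (2*γ^2*z^3*Q)
    linarith
  have hM45 : M^4 ≤ M^5 := pow_le_pow_right₀ (by linarith) (by norm_num)
  have hNb : |N| ≤ 80*M^5*L^3*z := by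
    have hsum : 64*M^4 + 16*M^5 ≤ 80*M^5 := by linarith [hM45]
    have := mul_le_mul_of_nonneg_right hsum (by positivity : (0:ℝ) ≤ L^3*z)
    linarith [t1, t2, t3, t4, t5, hTri]
  rw [key, abs_div, abs_of_pos (by positivity : (0:ℝ) < 2*z^4),
    div_le_div_iff₀ (by positivity) (by positivity)]
  calc |N| * z^3 ≤ 80*M^5*L^3*z*z^3 :=
        mul_le_mul_of_nonneg_right hNb (by positivity)
    _ = 40*M^5*L^3*(2*z^4) := by ring
end

section
/- Let m > 1 be real and n ∈ ℕ. For real t > x with x > 1 and x(t−x) > 1 define β(t,x) = (2√(x(t−x)) − m·ln x) / ln(√(x(t−x))). Then there exist C > 0 and x₀ > e^e such that for every x ≥ x₀ and every t > x satisfying m·ln x + (n−m)·ln(ln x) ≤ 2√(x(t−x)) ≤ m·ln x + (n−m+1/2)·ln(ln x), one has n − m − C/ln(ln x) ≤ β(t,x) ≤ n − m + 1/2 + C/ln(ln x). -/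
set_option maxHeartbeats 1000000


/-- **Bounds on the exponent `β(t,x)` (first half of the domain).**
Let `m > 1` and `n ∈ ℕ`.  With `β(t,x) = (2√(x(t−x)) − m·ln x)/ln(√(x(t−x)))`, there are
`C > 0` and `x₀ > e^e` such that for all `x ≥ x₀` and `t > x` with
`m·ln x + (n−m)·ln ln x ≤ 2√(x(t−x)) ≤ m·ln x + (n−m+1/2)·ln ln x`, one has
`n − m − C/ln ln x ≤ β(t,x) ≤ n − m + 1/2 + C/ln ln x`. -/
theorem beta_bounds_first_half (m : ℝ) (hm : 1 < m) (n : ℕ) :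
    ∃ C > 0, ∃ x₀ > Real.exp (Real.exp 1), ∀ x ≥ x₀, ∀ t > x,
      (m * Real.log x + ((n : ℝ) - m) * Real.log (Real.log x)
          ≤ 2 * Real.sqrt (x * (t - x)) ∧
        2 * Real.sqrt (x * (t - x))
          ≤ m * Real.log x + ((n : ℝ) - m + 1/2) * Real.log (Real.log x)) →
      ((n : ℝ) - m - C / Real.log (Real.log x)
          ≤ (2 * Real.sqrt (x * (t - x)) - m * Real.log x)
              / Real.log (Real.sqrt (x * (t - x))) ∧
        (2 * Real.sqrt (x * (t - x)) - m * Real.log x)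
              / Real.log (Real.sqrt (x * (t - x)))
          ≤ (n : ℝ) - m + 1/2 + C / Real.log (Real.log x)) := by
  have hn0 : (0:ℝ) ≤ (n:ℝ) := Nat.cast_nonneg n
  set K := Real.log (4*(m+(n:ℝ)+4)) with hKdef
  have hK0 : (0:ℝ) < K := Real.log_pos (by linarith)
  have hC0 : (0:ℝ) < 2*K*((n:ℝ)+m+1) := by
    apply mul_pos (by linarith) (by linarith)
  refine ⟨2*K*((n:ℝ)+m+1), hC0, Real.exp (Real.exp (2*K+2)), ?_, ?_⟩
  · exact Real.exp_lt_exp.mpr (Real.exp_lt_exp.mpr (by linarith))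
  intro x hx t ht h
  obtain ⟨h1, h2⟩ := h
  set S := Real.sqrt (x * (t - x)) with hSdef
  set ℓ := Real.log x with hldef
  set L := Real.log ℓ with hLdef
  set P := Real.log S with hPdef
  set C := 2*K*((n:ℝ)+m+1) with hCdef
  -- basic bounds on ℓ and L
  have hℓ : Real.exp (2*K+2) ≤ ℓ := by
    calc Real.exp (2*K+2) = Real.log (Real.exp (Real.exp (2*K+2))) := (Real.log_exp _).symm
    _ ≤ ℓ := Real.log_le_log (Real.exp_pos _) hx
  have hℓ0 : (0:ℝ) < ℓ := lt_of_lt_of_le (Real.exp_pos _) hℓ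
  have hL : 2*K+2 ≤ L := by
    calc 2*K+2 = Real.log (Real.exp (2*K+2)) := (Real.log_exp _).symm
    _ ≤ L := Real.log_le_log (Real.exp_pos _) hℓ
  have hL0 : (0:ℝ) < L := by linarith
  -- L ≤ ℓ/2
  have hLl : L ≤ ℓ/2 := by
    have e1 : Real.log (ℓ/2 * 2) = Real.log (ℓ/2) + Real.log 2 :=
      Real.log_mul (by positivity) (by norm_num)
    have e2 : ℓ/2 * 2 = ℓ := by ring
    have e3 : Real.log (ℓ/2) ≤ ℓ/2 - 1 := Real.log_le_sub_one_of_pos (by positivity)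
    have e4 : Real.log 2 < 1 := by
      have := Real.log_two_lt_d9; linarith
    rw [e2] at e1
    rw [hLdef, e1]; linarith
  -- bounds on S
  have hS4 : ℓ/4 ≤ S := by
    have ha : -m * L ≤ ((n:ℝ) - m) * L := by
      apply mul_le_mul_of_nonneg_right (by linarith) hL0.le
    nlinarith [h1]
  have hS0 : (0:ℝ) < S := by linarith
  have hSub : S ≤ (m+(n:ℝ)) * ℓ := by
    have hb : ((n:ℝ) - m + 1/2) * L ≤ (n:ℝ) * L := by
      apply mul_le_mul_of_nonneg_right (by linarith) hL0.le
    have hc : (n:ℝ) * L ≤ (n:ℝ) * ℓ := by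
      apply mul_le_mul_of_nonneg_left (by linarith) hn0
    nlinarith [h2]
  -- bounds on P = log S
  have hlog4 : Real.log 4 ≤ K := Real.log_le_log (by norm_num) (by linarith)
  have hlogmn : Real.log (m+(n:ℝ)) ≤ K := Real.log_le_log (by linarith) (by linarith)
  have hP_lb : L - K ≤ P := by
    have : Real.log (ℓ/4) ≤ P := Real.log_le_log (by positivity) hS4
    rw [Real.log_div (ne_of_gt hℓ0) (by norm_num)] at this
    linarith
  have hP_ub : P ≤ L + K := by
    have : P ≤ Real.log ((m+(n:ℝ)) * ℓ) := Real.log_le_log hS0 hSub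
    rw [Real.log_mul (by linarith) (ne_of_gt hℓ0)] at this
    linarith
  have hPhalf : L/2 ≤ P := by linarith
  have hP0 : (0:ℝ) < P := by linarith
  -- abbreviations
  have hD1 : ((n:ℝ) - m) * L ≤ 2*S - m*ℓ := by linarith
  have hD2 : 2*S - m*ℓ ≤ ((n:ℝ) - m + 1/2) * L := by linarith
  -- key product bounds
  have key_lo : ((n:ℝ) - m) * P - (2*S - m*ℓ) ≤ ((n:ℝ)+m) * K := by
    have hp1 : (0:ℝ) ≤ (((n:ℝ)+m) - ((n:ℝ)-m)) * (K + (P - L)) :=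
      mul_nonneg (by linarith) (by linarith)
    have hp2 : (0:ℝ) ≤ (((n:ℝ)+m) + ((n:ℝ)-m)) * (K - (P - L)) :=
      mul_nonneg (by linarith) (by linarith)
    nlinarith [hp1, hp2, hD1]
  have key_hi : (2*S - m*ℓ) - ((n:ℝ) - m + 1/2) * P ≤ ((n:ℝ)+m+1) * K := by
    have hp1 : (0:ℝ) ≤ (((n:ℝ)+m+1) - ((n:ℝ)-m+1/2)) * (K + (L - P)) :=
      mul_nonneg (by linarith) (by linarith)
    have hp2 : (0:ℝ) ≤ (((n:ℝ)+m+1) + ((n:ℝ)-m+1/2)) * (K - (L - P)) :=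
      mul_nonneg (by linarith) (by linarith)
    nlinarith [hp1, hp2, hD2]
  -- C/L * P ≥ C/2
  have hCL0 : (0:ℝ) ≤ C / L := div_nonneg hC0.le hL0.le
  have h5 : (C/L) * (L/2) ≤ (C/L) * P := mul_le_mul_of_nonneg_left hPhalf hCL0
  have h6 : (C/L) * (L/2) = K*((n:ℝ)+m+1) := by
    rw [hCdef]; field_simp
  constructor
  · rw [le_div_iff₀ hP0]
    nlinarith [key_lo, h5, h6, hK0]
  · rw [div_le_iff₀ hP0]
    nlinarith [key_hi, h5, h6, hK0]
end

section
/- Let m > 1 be real and n ∈ ℕ with n ≥ 1. For real t > x with x > 1 and x(t−x) > 1 define β(t,x) = (2√(x(t−x)) − m·ln x) / ln(√(x(t−x))). Then there exist C > 0 and x₀ > e^e such that for every x ≥ x₀ and every t > x satisfying m·ln x + (n−m−1/2)·ln(ln x) ≤ 2√(x(t−x)) ≤ m·ln x + (n−m)·ln(ln x), one has n − m − 1/2 − C/ln(ln x) ≤ β(t,x) ≤ n − m + C/ln(ln x). -/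
set_option maxHeartbeats 1000000 in
/-- **Bounds on the exponent `β(t,x)` (second half of the domain).**
Let `m > 1` and `n ∈ ℕ`, `n ≥ 1`.  With `β(t,x) = (2√(x(t−x)) − m·ln x)/ln(√(x(t−x)))`, there
are `C > 0` and `x₀ > e^e` such that for all `x ≥ x₀` and `t > x` with
`m·ln x + (n−m−1/2)·ln ln x ≤ 2√(x(t−x)) ≤ m·ln x + (n−m)·ln ln x`, one has
`n − m − 1/2 − C/ln ln x ≤ β(t,x) ≤ n − m + C/ln ln x`. -/
theorem beta_bounds_second_half (m : ℝ) (hm : 1 < m) (n : ℕ) (hn : 1 ≤ n) :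
    ∃ C > 0, ∃ x₀ > Real.exp (Real.exp 1), ∀ x ≥ x₀, ∀ t > x,
      (m * Real.log x + ((n : ℝ) - m - 1/2) * Real.log (Real.log x)
          ≤ 2 * Real.sqrt (x * (t - x)) ∧
        2 * Real.sqrt (x * (t - x))
          ≤ m * Real.log x + ((n : ℝ) - m) * Real.log (Real.log x)) →
      ((n : ℝ) - m - 1/2 - C / Real.log (Real.log x)
          ≤ (2 * Real.sqrt (x * (t - x)) - m * Real.log x)
              / Real.log (Real.sqrt (x * (t - x))) ∧
        (2 * Real.sqrt (x * (t - x)) - m * Real.log x)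
              / Real.log (Real.sqrt (x * (t - x)))
          ≤ (n : ℝ) - m + C / Real.log (Real.log x)) := by
  set α : ℝ := (n : ℝ) - m with hαdef
  set α' : ℝ := α - 1/2 with hα'def
  set K : ℝ := |α| + |α'| + 1 with hKdef
  have hαK : |α| ≤ K := by have := abs_nonneg α'; simp only [hKdef]; linarith
  have hα'K : |α'| ≤ K := by have := abs_nonneg α; simp only [hKdef]; linarith
  have hK1 : 1 ≤ K := by
    have := abs_nonneg α; have := abs_nonneg α'; simp only [hKdef]; linarith
  set c : ℝ := Real.log (m + K) + 1 with hcdef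
  have hmK1 : 1 ≤ m + K := by linarith
  have hc1 : 1 ≤ c := by
    have := Real.log_nonneg hmK1; simp only [hcdef]; linarith
  have hc0 : 0 < c := by linarith
  set C : ℝ := 2 * c * K with hCdef
  have hC0 : 0 < C := by
    have : (0:ℝ) < 2 * c * K := by nlinarith
    simpa [hCdef] using this
  have hm1 : (0:ℝ) < m - 1 := by linarith
  set M : ℝ := 4 * K / (m - 1) + 2 * c + 3 with hMdef
  have hM3 : 2 * c + 3 ≤ M := by
    have h0 : (0:ℝ) ≤ 4 * K / (m - 1) := div_nonneg (by linarith) hm1.le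
    simp only [hMdef]; linarith
  have hM1 : (1:ℝ) < M := by linarith
  clear_value M C c K α' α
  refine ⟨C, hC0, Real.exp (Real.exp M), Real.exp_lt_exp.2 (Real.exp_lt_exp.2 hM1), ?_⟩
  intro x hx t ht h
  obtain ⟨h1, h2⟩ := h
  set s : ℝ := Real.sqrt (x * (t - x)) with hsdef
  set L : ℝ := Real.log x with hLdef
  set LL : ℝ := Real.log L with hLLdef
  set D : ℝ := Real.log s with hDdef
  have hs0 : 0 ≤ s := by rw [hsdef]; exact Real.sqrt_nonneg _
  clear_value D LL L s
  -- L ≥ exp M, LL ≥ M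
  have hLbig : Real.exp M ≤ L := by
    have := Real.log_le_log (Real.exp_pos (Real.exp M)) hx
    simpa [hLdef, Real.log_exp] using this
  have hLpos : 0 < L := lt_of_lt_of_le (Real.exp_pos M) hLbig
  have hLLM : M ≤ LL := by
    have := Real.log_le_log (Real.exp_pos M) hLbig
    simpa [hLLdef, Real.log_exp] using this
  have hLL3 : 2 * c + 3 ≤ LL := le_trans hM3 hLLM
  have hLL0 : 0 < LL := by linarith
  have hLL_le_L : LL ≤ L := by
    have := Real.log_le_sub_one_of_pos hLpos
    simp only [hLLdef] at this ⊢; linarith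
  -- L ≥ LL^2/4
  have hLquad : LL ^ 2 / 4 ≤ L := by
    have he : LL / 2 + 1 ≤ Real.exp (LL / 2) := Real.add_one_le_exp _
    have hsplit : Real.exp LL = Real.exp (LL / 2) * Real.exp (LL / 2) := by
      rw [← Real.exp_add]; ring_nf
    have hLeq : Real.exp LL = L := by rw [hLLdef]; exact Real.exp_log hLpos
    have hsq : (LL / 2 + 1) * (LL / 2 + 1) ≤ Real.exp (LL / 2) * Real.exp (LL / 2) :=
      mul_le_mul he he (by linarith) (Real.exp_pos _).le
    nlinarith [hsq, hLL0.le]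
  -- key: K * LL ≤ (m-1) * L
  have h4K : 4 * K ≤ (m - 1) * M := by
    have e1 : (m - 1) * M = 4 * K + (m - 1) * (2 * c + 3) := by
      simp only [hMdef]; field_simp; ring
    have h0 : (0:ℝ) ≤ (m - 1) * (2 * c + 3) :=
      mul_nonneg hm1.le (by linarith)
    linarith
  have hKey : K * LL ≤ (m - 1) * L := by
    have h5 : 4 * K ≤ (m - 1) * LL := by
      have := mul_le_mul_of_nonneg_left hLLM hm1.le
      linarith
    have a1 := mul_le_mul_of_nonneg_left hLquad hm1.le
    have a2 := mul_le_mul_of_nonneg_right h5 hLL0.le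
    nlinarith [a1, a2]
  -- bounds on 2s
  have h2sL : L ≤ 2 * s := by
    have hna : -K ≤ α' := by have := neg_abs_le α'; linarith
    have : -(K * LL) ≤ α' * LL := by nlinarith
    nlinarith
  have hspos : 0 < s := by linarith
  have h2sU : 2 * s ≤ (m + K) * L := by
    have hA : α ≤ K := le_trans (le_abs_self α) hαK
    have : α * LL ≤ K * L := by nlinarith
    nlinarith
  -- bounds on D
  have hlog2a : (0:ℝ) ≤ Real.log 2 := Real.log_nonneg one_le_two
  have hlog2b : Real.log 2 ≤ 1 := by
    have := Real.log_le_sub_one_of_pos (two_pos (α := ℝ))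
    linarith
  have hDeq : Real.log (2 * s) = Real.log 2 + D := by
    rw [hDdef, Real.log_mul two_ne_zero (ne_of_gt hspos)]
  have hDlow : LL - c ≤ D := by
    have := Real.log_le_log hLpos h2sL
    rw [← hLLdef] at this
    rw [hDeq] at this
    linarith
  have hDhigh : D ≤ LL + c := by
    have h1' : Real.log (2 * s) ≤ Real.log ((m + K) * L) :=
      Real.log_le_log (by linarith) h2sU
    have h2' : Real.log ((m + K) * L) = Real.log (m + K) + LL := by
      rw [Real.log_mul (by linarith) (ne_of_gt hLpos), hLLdef]
    rw [hDeq, h2'] at h1'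
    simp only [hcdef]; linarith
  have hDhalf : LL / 2 ≤ D := by linarith
  have hDpos : 0 < D := by linarith
  -- C/LL * D ≥ K * c
  have hCD : K * c ≤ C / LL * D := by
    have h1' : C / LL * (LL / 2) ≤ C / LL * D :=
      mul_le_mul_of_nonneg_left hDhalf (by positivity)
    have h2' : C / LL * (LL / 2) = c * K := by
      field_simp [hCdef]; rw [hCdef]
    nlinarith
  have habs1 : α' * (D - LL) ≤ |α'| * c := by
    calc α' * (D - LL) ≤ |α' * (D - LL)| := le_abs_self _
      _ = |α'| * |D - LL| := abs_mul _ _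
      _ ≤ |α'| * c := by
          apply mul_le_mul_of_nonneg_left _ (abs_nonneg _)
          rw [abs_le]; constructor <;> linarith
  have habs2 : α * (LL - D) ≤ |α| * c := by
    calc α * (LL - D) ≤ |α * (LL - D)| := le_abs_self _
      _ = |α| * |LL - D| := abs_mul _ _
      _ ≤ |α| * c := by
          apply mul_le_mul_of_nonneg_left _ (abs_nonneg _)
          rw [abs_le]; constructor <;> linarith
  have hab1 : |α'| * c ≤ K * c := mul_le_mul_of_nonneg_right hα'K hc0.le
  have hab2 : |α| * c ≤ K * c := mul_le_mul_of_nonneg_right hαK hc0.le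
  constructor
  · rw [le_div_iff₀ hDpos]
    have key : (α' - C / LL) * D = α' * LL - α' * (D - LL) * (-1) - C / LL * D - α' * LL + α' * LL := by ring
    calc (α' - C / LL) * D = α' * LL + α' * (D - LL) - C / LL * D := by ring
      _ ≤ α' * LL + |α'| * c - K * c := by linarith
      _ ≤ α' * LL := by linarith
      _ ≤ 2 * s - m * L := by linarith
  · rw [div_le_iff₀ hDpos]
    calc 2 * s - m * L ≤ α * LL := by linarith
      _ = α * D + α * (LL - D) := by ring
      _ ≤ α * D + |α| * c := by linarith
      _ ≤ α * D + C / LL * D := by linarith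
      _ = (α + C / LL) * D := by ring
end

section
/- Let m > 1 and ε₁ > 0 be real. For t > x > 1 define p₁(t,x) = m·ln x − m·ln(√(x(t−x))) − 2√(x(t−x)). Then there exist C > 0 and x₀ > e such that for every x ≥ x₀ and every t satisfying x + 1/x ≤ t ≤ x + (1/(4x))·(m·ln x − (m+ε₁)·ln(ln x))², one has e^{−p₁(t,x)} ≤ C·(ln x)^{−ε₁}. -/
/-- **Smallness of `e^{−p₁}` in the near-light-cone region (part II).**
Let `m > 1` and `ε₁ > 0`.  With `p₁(t,x) = m·ln x − m·ln√(x(t−x)) − 2√(x(t−x))`, there are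
`C > 0` and `x₀ > e` such that for all `x ≥ x₀` and all `t` with
`x + 1/x ≤ t ≤ x + (1/(4x))·(m·ln x − (m+ε₁)·ln ln x)²`, one has
`e^{−p₁(t,x)} ≤ C·(ln x)^{−ε₁}`. -/
theorem exp_neg_p1_small (m ε₁ : ℝ) (hm : 1 < m) (hε : 0 < ε₁) :
    ∃ C > 0, ∃ x₀ > Real.exp 1, ∀ x ≥ x₀, ∀ t : ℝ,
      (x + 1 / x ≤ t ∧
        t ≤ x + (1 / (4 * x))
              * (m * Real.log x - (m + ε₁) * Real.log (Real.log x)) ^ 2) →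
      Real.exp (-(m * Real.log x - m * Real.log (Real.sqrt (x * (t - x)))
          - 2 * Real.sqrt (x * (t - x))))
        ≤ C * Real.log x ^ (-ε₁) := by
  have hm0 : 0 < m := by linarith
  have hε' : 0 < m + ε₁ := by linarith
  -- the quantity L(x) = m log x - (m+ε₁) log log x tends to ∞
  have h1 : Filter.Tendsto (fun y : ℝ => m * y - (m + ε₁) * Real.log y)
      Filter.atTop Filter.atTop := by
    have ho := Real.isLittleO_log_id_atTop.def
      (show (0:ℝ) < m / (2 * (m + ε₁)) by positivity)
    have key : ∀ᶠ y : ℝ in Filter.atTop,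
        (m / 2) * y ≤ m * y - (m + ε₁) * Real.log y := by
      filter_upwards [ho, Filter.eventually_ge_atTop (1 : ℝ)] with y hy hy1
      have hly : |Real.log y| ≤ m / (2 * (m + ε₁)) * |y| := by simpa using hy
      have hy0 : (0:ℝ) ≤ y := by linarith
      have hl0 : 0 ≤ Real.log y := Real.log_nonneg hy1
      rw [abs_of_nonneg hl0, abs_of_nonneg hy0] at hly
      have : (m + ε₁) * Real.log y ≤ (m / 2) * y := by
        have := mul_le_mul_of_nonneg_left hly (le_of_lt hε')
        calc (m + ε₁) * Real.log y ≤ (m + ε₁) * (m / (2 * (m + ε₁)) * y) := this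
          _ = (m / 2) * y := by field_simp
      linarith
    exact Filter.tendsto_atTop_mono' _ key
      (Filter.Tendsto.const_mul_atTop (by linarith : (0:ℝ) < m / 2) Filter.tendsto_id)
  have hL : Filter.Tendsto
      (fun x : ℝ => m * Real.log x - (m + ε₁) * Real.log (Real.log x))
      Filter.atTop Filter.atTop := h1.comp Real.tendsto_log_atTop
  obtain ⟨x₀, hx₀⟩ := Filter.eventually_atTop.mp
    ((hL.eventually_ge_atTop 2).and (Filter.eventually_gt_atTop (Real.exp 1)))
  refine ⟨Real.exp (m * Real.log (m / 2)), Real.exp_pos _,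
    max x₀ (Real.exp 1 + 1), lt_of_lt_of_le (by linarith) (le_max_right _ _), ?_⟩
  intro x hx t ⟨ht1, ht2⟩
  obtain ⟨hL2, hex⟩ := hx₀ x (le_trans (le_max_left _ _) hx)
  set L := m * Real.log x - (m + ε₁) * Real.log (Real.log x) with hLdef
  have hx0 : (0:ℝ) < x := lt_trans (Real.exp_pos 1) hex
  have hlogx1 : 1 < Real.log x := (Real.lt_log_iff_exp_lt hx0).mpr hex
  have hlogx0 : 0 < Real.log x := by linarith
  have hllx0 : 0 ≤ Real.log (Real.log x) := Real.log_nonneg (le_of_lt hlogx1)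
  -- bounds on u = x(t-x)
  have hu1 : (1:ℝ) ≤ x * (t - x) := by
    have : 1 / x ≤ t - x := by linarith
    calc (1:ℝ) = x * (1 / x) := by field_simp
      _ ≤ x * (t - x) := by
        exact mul_le_mul_of_nonneg_left this (le_of_lt hx0)
  have hu2 : x * (t - x) ≤ (L / 2) ^ 2 := by
    have : t - x ≤ (1 / (4 * x)) * L ^ 2 := by linarith
    calc x * (t - x) ≤ x * ((1 / (4 * x)) * L ^ 2) :=
          mul_le_mul_of_nonneg_left this (le_of_lt hx0)
      _ = (L / 2) ^ 2 := by field_simp; ring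
  set s := Real.sqrt (x * (t - x)) with hsdef
  have hs1 : (1:ℝ) ≤ s := by
    rw [hsdef, show (1:ℝ) = Real.sqrt 1 from (Real.sqrt_one).symm]
    exact Real.sqrt_le_sqrt hu1
  have hs2 : s ≤ L / 2 := by
    have := Real.sqrt_le_sqrt hu2
    rwa [Real.sqrt_sq (by linarith : (0:ℝ) ≤ L / 2)] at this
  have hs0 : 0 < s := by linarith
  -- log bounds
  have hlog1 : Real.log s ≤ Real.log (L / 2) := Real.log_le_log hs0 hs2
  have hLm : L / 2 ≤ (m / 2) * Real.log x := by
    have : 0 ≤ (m + ε₁) * Real.log (Real.log x) := mul_nonneg (le_of_lt hε') hllx0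
    rw [hLdef]; linarith
  have hlog2 : Real.log (L / 2) ≤ Real.log ((m / 2) * Real.log x) :=
    Real.log_le_log (by linarith) hLm
  have hlogmul : Real.log ((m / 2) * Real.log x)
      = Real.log (m / 2) + Real.log (Real.log x) :=
    Real.log_mul (by positivity) (by positivity)
  -- conclude
  have hgoal : m * Real.log s + 2 * s - m * Real.log x
      ≤ m * Real.log (m / 2) - ε₁ * Real.log (Real.log x) := by
    have h2s : 2 * s ≤ L := by linarith
    have hms : m * Real.log s ≤ m * (Real.log (m / 2) + Real.log (Real.log x)) := by
      rw [← hlogmul]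
      exact mul_le_mul_of_nonneg_left (le_trans hlog1 hlog2) (le_of_lt hm0)
    have : L - m * Real.log x = -(m + ε₁) * Real.log (Real.log x) := by
      rw [hLdef]; ring
    nlinarith [mul_nonneg (le_of_lt hm0) hllx0]
  rw [Real.rpow_def_of_pos hlogx0, ← Real.exp_add, Real.exp_le_exp]
  have : -(m * Real.log x - m * Real.log s - 2 * s)
      = m * Real.log s + 2 * s - m * Real.log x := by ring
  rw [this]
  linarith [hgoal]
end

section
/- Let m > 1, ε₂ ∈ (0, 1/2), and K ≥ m be real numbers. For t > x > 1 define p₂(t,x) = m·ln x − 2√(x(t−x)) − (m − 1/2)·ln(√(x(t−x))). Then there exist C > 0 and x₀ > e such that for every x ≥ x₀ and every t satisfying x + (1/(4x))·(m·ln x − K·ln(ln x))² ≤ t ≤ x + (1/(4x))·(m·ln x − (m+ε₂−1/2)·ln(ln x))², both estimates hold: e^{−p₂(t,x)} ≤ C·(ln x)^{−ε₂} and e^{p₂(t,x)} ≤ C·(ln x)^{K−m+1/2}. -/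
set_option maxHeartbeats 1000000 in


/-- **Two-sided control of `e^{±p₂}` in the near-light-cone region (part III).**
Let `m > 1`, `ε₂ ∈ (0, 1/2)`, `K ≥ m`.  With
`p₂(t,x) = m·ln x − 2√(x(t−x)) − (m−1/2)·ln√(x(t−x))`, there are `C > 0` and `x₀ > e` such
that for all `x ≥ x₀` and all `t` with
`x + (1/(4x))·(m·ln x − K·ln ln x)² ≤ t ≤ x + (1/(4x))·(m·ln x − (m+ε₂−1/2)·ln ln x)²`,
one has `e^{−p₂(t,x)} ≤ C·(ln x)^{−ε₂}` and `e^{p₂(t,x)} ≤ C·(ln x)^{K−m+1/2}`. -/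
theorem exp_p2_two_sided (m ε₂ K : ℝ) (hm : 1 < m)
    (hε0 : 0 < ε₂) (hε1 : ε₂ < 1/2) (hK : m ≤ K) :
    ∃ C > 0, ∃ x₀ > Real.exp 1, ∀ x ≥ x₀, ∀ t : ℝ,
      (x + (1 / (4 * x)) * (m * Real.log x - K * Real.log (Real.log x)) ^ 2 ≤ t ∧
        t ≤ x + (1 / (4 * x))
              * (m * Real.log x - (m + ε₂ - 1/2) * Real.log (Real.log x)) ^ 2) →
      (Real.exp (-(m * Real.log x - 2 * Real.sqrt (x * (t - x))
            - (m - 1/2) * Real.log (Real.sqrt (x * (t - x)))))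
          ≤ C * Real.log x ^ (-ε₂) ∧
        Real.exp (m * Real.log x - 2 * Real.sqrt (x * (t - x))
            - (m - 1/2) * Real.log (Real.sqrt (x * (t - x))))
          ≤ C * Real.log x ^ (K - m + 1/2)) := by
  have hm0 : (0:ℝ) < m := by linarith
  have hK0 : (0:ℝ) < K := by linarith
  set A : ℝ := max 2 ((2*K/(m-1))^2) with hA
  refine ⟨(m/2) ^ (m - 1/2) + 2 ^ (m - 1/2),
    add_pos (Real.rpow_pos_of_pos (by linarith) _) (Real.rpow_pos_of_pos two_pos _),
    Real.exp A, by
      exact Real.exp_lt_exp.mpr (lt_of_lt_of_le one_lt_two (le_max_left _ _)), ?_⟩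
  intro x hx t ht
  obtain ⟨ht1, ht2⟩ := ht
  set L := Real.log x with hLdef
  have hx0 : 0 < x := lt_of_lt_of_le (Real.exp_pos A) hx
  have hLA : A ≤ L := by
    rw [hLdef, ← Real.log_exp A]
    exact Real.log_le_log (Real.exp_pos A) hx
  have hL2 : 2 ≤ L := le_trans (le_max_left _ _) hLA
  have hL0 : 0 < L := by linarith
  have hsL : 2*K/(m-1) ≤ Real.sqrt L := by
    have h1 : ((2*K/(m-1))^2) ≤ L := le_trans (le_max_right _ _) hLA
    have h2 : (0:ℝ) ≤ 2*K/(m-1) := div_nonneg (by linarith) (by linarith)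
    calc 2*K/(m-1) = Real.sqrt ((2*K/(m-1))^2) := (Real.sqrt_sq h2).symm
      _ ≤ Real.sqrt L := Real.sqrt_le_sqrt h1
  set LL := Real.log L with hLLdef
  have hLL0 : 0 ≤ LL := Real.log_nonneg (by linarith)
  have hKLL : K * LL ≤ (m-1) * L := by
    have hsp : 0 < Real.sqrt L := Real.sqrt_pos.mpr hL0
    have hlog : LL ≤ 2 * Real.sqrt L := by
      have h1 := Real.log_le_sub_one_of_pos hsp
      have h2 : Real.log (Real.sqrt L) = L.log / 2 := Real.log_sqrt hL0.le
      rw [hLLdef]; linarith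
    have h3 : 2*K ≤ (m-1) * Real.sqrt L := by
      rw [div_le_iff₀ (by linarith : (0:ℝ) < m - 1)] at hsL
      linarith
    calc K * LL ≤ K * (2 * Real.sqrt L) := mul_le_mul_of_nonneg_left hlog hK0.le
      _ = (2*K) * Real.sqrt L := by ring
      _ ≤ ((m-1) * Real.sqrt L) * Real.sqrt L :=
          mul_le_mul_of_nonneg_right h3 (Real.sqrt_nonneg L)
      _ = (m-1) * L := by rw [mul_assoc, Real.mul_self_sqrt hL0.le]
  set B : ℝ := m * L - K * LL with hBdef
  set D : ℝ := m * L - (m + ε₂ - 1/2) * LL with hDdef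
  have hB : L ≤ B := by rw [hBdef]; nlinarith
  have hBD : B ≤ D := by
    rw [hBdef, hDdef]
    nlinarith [mul_nonneg (show (0:ℝ) ≤ K - (m + ε₂ - 1/2) by linarith) hLL0]
  have hD : D ≤ m * L := by
    rw [hDdef]
    nlinarith [mul_nonneg (show (0:ℝ) ≤ m + ε₂ - 1/2 by linarith) hLL0]
  clear_value L LL B D
  have h1 : (B/2)^2 ≤ x * (t - x) := by
    have h := sub_nonneg.mpr ht1
    have heq : x * ((1/(4*x)) * B^2) = (B/2)^2 := by
      field_simp
      ring
    calc (B/2)^2 = x * ((1/(4*x)) * B^2) := heq.symm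
      _ ≤ x * (t - x) := by
          apply mul_le_mul_of_nonneg_left _ hx0.le
          linarith
  have h2 : x * (t - x) ≤ (D/2)^2 := by
    have heq : x * ((1/(4*x)) * D^2) = (D/2)^2 := by field_simp; ring
    calc x * (t - x) ≤ x * ((1/(4*x)) * D^2) := by
          apply mul_le_mul_of_nonneg_left _ hx0.le
          linarith
      _ = (D/2)^2 := heq
  set s : ℝ := Real.sqrt (x * (t - x)) with hsdef
  clear_value s
  have hs_lb : B/2 ≤ s := by
    rw [hsdef]
    have h := Real.sqrt_le_sqrt h1
    rwa [Real.sqrt_sq (by linarith : (0:ℝ) ≤ B/2)] at h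
  have hs_ub : s ≤ D/2 := by
    rw [hsdef]
    have h := Real.sqrt_le_sqrt h2
    rwa [Real.sqrt_sq (by linarith : (0:ℝ) ≤ D/2)] at h
  have hs_pos : 0 < s := by linarith
  constructor
  · have hexp1 : Real.exp (-(m*L - 2*s - (m-1/2)*Real.log s))
        = Real.exp (2*s - m*L) * s ^ (m-1/2) := by
      rw [Real.rpow_def_of_pos hs_pos, ← Real.exp_add]
      congr 1; ring
    rw [hexp1]
    have b1 : Real.exp (2*s - m*L) ≤ L ^ (-(m + ε₂ - 1/2)) := by
      rw [Real.rpow_def_of_pos hL0]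
      apply Real.exp_le_exp.mpr
      rw [← hLLdef]
      have h5 : 2*s ≤ D := by linarith
      rw [hDdef] at h5
      nlinarith
    have b2 : s ^ (m-1/2) ≤ (m/2) ^ (m-1/2) * L ^ (m-1/2) := by
      rw [← Real.mul_rpow (by linarith : (0:ℝ) ≤ m/2) hL0.le]
      apply Real.rpow_le_rpow hs_pos.le _ (by linarith)
      calc s ≤ D/2 := hs_ub
        _ ≤ m*L/2 := by linarith
        _ = m/2 * L := by ring
    calc Real.exp (2*s - m*L) * s ^ (m-1/2)
        ≤ L ^ (-(m + ε₂ - 1/2)) * ((m/2) ^ (m-1/2) * L ^ (m-1/2)) := by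
          apply mul_le_mul b1 b2 (Real.rpow_nonneg hs_pos.le _) (Real.rpow_nonneg hL0.le _)
      _ = (m/2) ^ (m-1/2) * (L ^ (-(m + ε₂ - 1/2)) * L ^ (m-1/2)) := by ring
      _ = (m/2) ^ (m-1/2) * L ^ (-ε₂) := by
          rw [← Real.rpow_add hL0]
          congr 1; ring
      _ ≤ ((m/2) ^ (m - 1/2) + 2 ^ (m - 1/2)) * L ^ (-ε₂) := by
          apply mul_le_mul_of_nonneg_right _ (Real.rpow_nonneg hL0.le _)
          have : (0:ℝ) < (2:ℝ) ^ (m-1/2) := Real.rpow_pos_of_pos two_pos _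
          linarith
  · have hexp2 : Real.exp (m*L - 2*s - (m-1/2)*Real.log s)
        = Real.exp (m*L - 2*s) * s ^ (-(m-1/2)) := by
      rw [Real.rpow_def_of_pos hs_pos, ← Real.exp_add]
      congr 1; ring
    rw [hexp2]
    have b1 : Real.exp (m*L - 2*s) ≤ L ^ K := by
      rw [Real.rpow_def_of_pos hL0]
      apply Real.exp_le_exp.mpr
      rw [← hLLdef]
      have h5 : B ≤ 2*s := by linarith
      rw [hBdef] at h5
      nlinarith
    have b2 : s ^ (-(m-1/2)) ≤ 2 ^ (m-1/2) * L ^ (-(m-1/2)) := by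
      have hL2s : L/2 ≤ s := by linarith
      have hstep : s ^ (-(m-1/2)) ≤ (L/2) ^ (-(m-1/2)) :=
        Real.rpow_le_rpow_of_nonpos (by linarith) hL2s (by linarith)
      have heq : (L/2 : ℝ) ^ (-(m-1/2)) = 2 ^ (m-1/2) * L ^ (-(m-1/2)) := by
        rw [Real.div_rpow hL0.le (by norm_num : (0:ℝ) ≤ 2),
          Real.rpow_neg (by norm_num : (0:ℝ) ≤ 2), Real.rpow_neg hL0.le]
        field_simp
      rw [heq] at hstep
      exact hstep
    calc Real.exp (m*L - 2*s) * s ^ (-(m-1/2))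
        ≤ L ^ K * (2 ^ (m-1/2) * L ^ (-(m-1/2))) := by
          apply mul_le_mul b1 b2 (Real.rpow_nonneg hs_pos.le _) (Real.rpow_nonneg hL0.le _)
      _ = 2 ^ (m-1/2) * (L ^ K * L ^ (-(m-1/2))) := by ring
      _ = 2 ^ (m-1/2) * L ^ (K - m + 1/2) := by
          rw [← Real.rpow_add hL0]
          congr 1; ring
      _ ≤ ((m/2) ^ (m - 1/2) + 2 ^ (m - 1/2)) * L ^ (K - m + 1/2) := by
          apply mul_le_mul_of_nonneg_right _ (Real.rpow_nonneg hL0.le _)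
          have : (0:ℝ) < (m/2:ℝ) ^ (m-1/2) := Real.rpow_pos_of_pos (by linarith) _
          linarith
end

section
/- For every δ ∈ (0,1) there exists C > 0 such that for every ζ ∈ ℂ with ζ ≠ 0 and |Im ζ| ≥ δ·|ζ|, the Cauchy transform of the Gaussian satisfies | (1/(2πi))·∫_{−∞}^{∞} e^{−s²}/(s − ζ) ds − i/(2√π·ζ) | ≤ C/|ζ|³. -/
open MeasureTheory

/-- **Large-`ζ` expansion of the Cauchy transform of the Gaussian.**
For every `δ ∈ (0,1)` there is `C > 0` such that for every nonzero `ζ ∈ ℂ` with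
`|Im ζ| ≥ δ·|ζ|`,
`| (1/(2πi))·∫_{ℝ} e^{−s²}/(s − ζ) ds − i/(2√π·ζ) | ≤ C/|ζ|³`. -/
theorem cauchy_transform_gaussian_expansion (δ : ℝ) (hδ0 : 0 < δ) (hδ1 : δ < 1) :
    ∃ C > 0, ∀ ζ : ℂ, ζ ≠ 0 → δ * ‖ζ‖ ≤ |ζ.im| →
      ‖((1 / (2 * (Real.pi : ℂ) * Complex.I))
              * (∫ s : ℝ, Complex.exp (-(s : ℂ) ^ 2) / ((s : ℂ) - ζ))
            - Complex.I / (2 * (Real.sqrt Real.pi : ℂ) * ζ))‖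
        ≤ C / ‖ζ‖ ^ 3 := by
  -- the constant
  set K : ℝ := ∫ s : ℝ, s ^ 2 * Real.exp (-s ^ 2) with hKdef
  have hKnn : 0 ≤ K := integral_nonneg fun s => by positivity
  have hK : Integrable (fun s : ℝ => s ^ 2 * Real.exp (-s ^ 2)) := by
    have := integrable_rpow_mul_exp_neg_mul_sq (b := 1) one_pos (s := 2) (by norm_num)
    simpa [Real.rpow_two, neg_mul, one_mul] using this
  refine ⟨(K + 1) / (2 * Real.pi * δ), by positivity, ?_⟩
  intro ζ hζ0 him
  have ha : 0 < ‖ζ‖ := by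
    simpa [norm_pos_iff] using hζ0
  set a : ℝ := ‖ζ‖ with hadef
  set d : ℝ := δ * a with hddef
  have hd : 0 < d := by positivity
  have hlow : ∀ s : ℝ, d ≤ ‖(s : ℂ) - ζ‖ := by
    intro s
    have h1 : |((s : ℂ) - ζ).im| ≤ ‖(s : ℂ) - ζ‖ :=
      Complex.abs_im_le_norm _
    have h2 : ((s : ℂ) - ζ).im = -ζ.im := by simp
    rw [h2, abs_neg] at h1
    exact le_trans him h1
  have hne : ∀ s : ℝ, (s : ℂ) - ζ ≠ 0 := by
    intro s h
    have := hlow s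
    rw [h] at this
    simp at this
    linarith
  -- integrability
  have hA : Integrable (fun s : ℝ => Complex.exp (-(s : ℂ) ^ 2)) := by
    have heq : ∀ s : ℝ, Complex.exp (-(s : ℂ) ^ 2) = ((Real.exp (-s ^ 2) : ℝ) : ℂ) := by
      intro s; rw [Complex.ofReal_exp]; push_cast; ring_nf
    have hre : Integrable (fun s : ℝ => Real.exp (-s ^ 2)) := by
      simpa [neg_mul, one_mul] using integrable_exp_neg_mul_sq (b := 1) one_pos
    simp_rw [heq]
    exact hre.ofReal
  have hB : Integrable (fun s : ℝ => (s : ℂ) * Complex.exp (-(s : ℂ) ^ 2)) := by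
    have heq : ∀ s : ℝ, (s : ℂ) * Complex.exp (-(s : ℂ) ^ 2)
        = ((s * Real.exp (-s ^ 2) : ℝ) : ℂ) := by
      intro s; rw [Complex.ofReal_mul, Complex.ofReal_exp]; push_cast; ring_nf
    have hre : Integrable (fun s : ℝ => s * Real.exp (-s ^ 2)) := by
      simpa [neg_mul, one_mul] using integrable_mul_exp_neg_mul_sq (b := 1) one_pos
    simp_rw [heq]
    exact hre.ofReal
  have hnormC : ∀ s : ℝ,
      ‖(s : ℂ) ^ 2 * Complex.exp (-(s : ℂ) ^ 2) / ((s : ℂ) - ζ)‖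
        = s ^ 2 * Real.exp (-s ^ 2) / ‖(s : ℂ) - ζ‖ := by
    intro s
    have h1 : (-(s : ℂ) ^ 2).re = -s ^ 2 := by
      have h2 : (-(s : ℂ) ^ 2) = ((-s ^ 2 : ℝ) : ℂ) := by push_cast; ring
      rw [h2, Complex.ofReal_re]
    rw [norm_div, norm_mul, norm_pow, Complex.norm_real, Real.norm_eq_abs,
      Complex.norm_exp, h1, sq_abs]
  have hC : Integrable
      (fun s : ℝ => (s : ℂ) ^ 2 * Complex.exp (-(s : ℂ) ^ 2) / ((s : ℂ) - ζ)) := by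
    refine Integrable.mono' (hK.div_const d) ?_ ?_
    · apply Continuous.aestronglyMeasurable
      exact (Continuous.mul (by fun_prop) (by fun_prop)).div (by fun_prop) hne
    · filter_upwards with s
      rw [hnormC s]
      apply div_le_div_of_nonneg_left (by positivity) hd (hlow s)
  -- pointwise identity
  have hid : ∀ s : ℝ, Complex.exp (-(s : ℂ) ^ 2) / ((s : ℂ) - ζ)
      = (-ζ⁻¹) * Complex.exp (-(s : ℂ) ^ 2)
        + (-(ζ⁻¹ ^ 2)) * ((s : ℂ) * Complex.exp (-(s : ℂ) ^ 2))
        + ζ⁻¹ ^ 2 * ((s : ℂ) ^ 2 * Complex.exp (-(s : ℂ) ^ 2) / ((s : ℂ) - ζ)) := by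
    intro s
    field_simp [hne s]
    ring
  -- value of the Gaussian integral
  have hIA : (∫ s : ℝ, Complex.exp (-(s : ℂ) ^ 2)) = ((Real.sqrt Real.pi : ℝ) : ℂ) := by
    have heq : ∀ s : ℝ, Complex.exp (-(s : ℂ) ^ 2) = ((Real.exp (-s ^ 2) : ℝ) : ℂ) := by
      intro s; rw [Complex.ofReal_exp]; push_cast; ring_nf
    simp_rw [heq]
    have h2 : (∫ s : ℝ, ((Real.exp (-s ^ 2) : ℝ) : ℂ))
        = ((∫ s : ℝ, Real.exp (-s ^ 2) : ℝ) : ℂ) := integral_ofReal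
    rw [h2]
    norm_cast
    have := integral_gaussian 1
    simpa [neg_mul, one_mul] using this
  -- odd integrand vanishes
  have hIB : (∫ s : ℝ, (s : ℂ) * Complex.exp (-(s : ℂ) ^ 2)) = 0 := by
    have h : (∫ s : ℝ, ((-s : ℝ) : ℂ) * Complex.exp (-((-s : ℝ) : ℂ) ^ 2))
        = ∫ s : ℝ, (s : ℂ) * Complex.exp (-(s : ℂ) ^ 2) :=
      integral_neg_eq_self (fun t : ℝ => (t : ℂ) * Complex.exp (-(t : ℂ) ^ 2)) _
    have h2 : (∫ s : ℝ, ((-s : ℝ) : ℂ) * Complex.exp (-((-s : ℝ) : ℂ) ^ 2))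
        = -∫ s : ℝ, (s : ℂ) * Complex.exp (-(s : ℂ) ^ 2) := by
      rw [← integral_neg]
      congr 1 with s
      push_cast
      ring_nf
    rw [h2] at h
    have h3 : (2 : ℂ) * (∫ s : ℝ, (s : ℂ) * Complex.exp (-(s : ℂ) ^ 2)) = 0 := by
      linear_combination -h
    rcases mul_eq_zero.mp h3 with h4 | h4
    · norm_num at h4
    · exact h4
  set T : ℂ := ∫ s : ℝ, (s : ℂ) ^ 2 * Complex.exp (-(s : ℂ) ^ 2) / ((s : ℂ) - ζ) with hT
  have hsplit : (∫ s : ℝ, Complex.exp (-(s : ℂ) ^ 2) / ((s : ℂ) - ζ))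
      = (-ζ⁻¹) * ((Real.sqrt Real.pi : ℝ) : ℂ) + ζ⁻¹ ^ 2 * T := by
    have i1 : Integrable (fun s : ℝ => -ζ⁻¹ * Complex.exp (-(s : ℂ) ^ 2)) :=
      hA.const_mul _
    have i2 : Integrable (fun s : ℝ => -ζ⁻¹ ^ 2 * ((s : ℂ) * Complex.exp (-(s : ℂ) ^ 2))) :=
      hB.const_mul _
    have i3 : Integrable (fun s : ℝ =>
        ζ⁻¹ ^ 2 * ((s : ℂ) ^ 2 * Complex.exp (-(s : ℂ) ^ 2) / ((s : ℂ) - ζ))) :=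
      hC.const_mul _
    have i12 : Integrable (fun s : ℝ => -ζ⁻¹ * Complex.exp (-(s : ℂ) ^ 2)
        + -ζ⁻¹ ^ 2 * ((s : ℂ) * Complex.exp (-(s : ℂ) ^ 2))) := i1.add i2
    rw [integral_congr_ae (Filter.Eventually.of_forall hid)]
    rw [integral_add i12 i3, integral_add i1 i2,
      integral_const_mul, integral_const_mul, integral_const_mul, hIA, hIB, ← hT]
    ring
  have hTbound : ‖T‖ ≤ K / d := by
    calc ‖T‖ ≤ ∫ s : ℝ, s ^ 2 * Real.exp (-s ^ 2) / d := by
          refine norm_integral_le_of_norm_le (hK.div_const d) ?_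
          filter_upwards with s
          rw [hnormC s]
          exact div_le_div_of_nonneg_left (by positivity) hd (hlow s)
      _ = K / d := by rw [integral_div]
  have hsπ : (0 : ℝ) < Real.sqrt Real.pi := Real.sqrt_pos.mpr Real.pi_pos
  have hπ0 : (Real.pi : ℂ) ≠ 0 := by exact_mod_cast Real.pi_ne_zero
  have hs0 : ((Real.sqrt Real.pi : ℝ) : ℂ) ≠ 0 := by exact_mod_cast hsπ.ne'
  have hπC : ((Real.sqrt Real.pi : ℝ) : ℂ) * ((Real.sqrt Real.pi : ℝ) : ℂ)
      = (Real.pi : ℂ) := by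
    rw [← Complex.ofReal_mul, Real.mul_self_sqrt Real.pi_pos.le]
  have hmain : (1 / (2 * (Real.pi : ℂ) * Complex.I))
        * ((-ζ⁻¹) * ((Real.sqrt Real.pi : ℝ) : ℂ) + ζ⁻¹ ^ 2 * T)
        - Complex.I / (2 * ((Real.sqrt Real.pi : ℝ) : ℂ) * ζ)
      = (1 / (2 * (Real.pi : ℂ) * Complex.I)) * ζ⁻¹ ^ 2 * T := by
    have hI : Complex.I ≠ 0 := Complex.I_ne_zero
    have hkey : (1 / (2 * (Real.pi : ℂ) * Complex.I))
        * ((-ζ⁻¹) * ((Real.sqrt Real.pi : ℝ) : ℂ))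
        = Complex.I / (2 * ((Real.sqrt Real.pi : ℝ) : ℂ) * ζ) := by
      field_simp
      linear_combination (-1 : ℂ) * hπC + (-(Real.pi : ℂ)) * Complex.I_sq
    rw [mul_add, hkey]
    ring
  rw [hsplit, hmain]
  have habs : ‖(1 / (2 * (Real.pi : ℂ) * Complex.I)) * ζ⁻¹ ^ 2 * T‖
      = 1 / (2 * Real.pi) * a⁻¹ ^ 2 * ‖T‖ := by
    rw [norm_mul, norm_mul, norm_div, norm_pow, norm_inv]
    simp only [norm_one, norm_mul, Complex.norm_two, Complex.norm_I, Complex.norm_real,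
      Real.norm_eq_abs, mul_one]
    rw [abs_of_pos Real.pi_pos, ← hadef]
  rw [habs]
  have hstep : 1 / (2 * Real.pi) * a⁻¹ ^ 2 * ‖T‖
      ≤ 1 / (2 * Real.pi) * a⁻¹ ^ 2 * (K / d) := by
    exact mul_le_mul_of_nonneg_left hTbound (by positivity)
  refine hstep.trans ?_
  have heq : 1 / (2 * Real.pi) * a⁻¹ ^ 2 * (K / d) = K / (2 * Real.pi * δ) / a ^ 3 := by
    rw [hddef]
    field_simp
  rw [heq]
  gcongr
  linarith
end
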